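/- Let p = p(θ₀) for some θ₀ ∈ Θ, let C ⊆ Θ be compact with inf_{θ ∈ Θ∖C} HD(p,θ) > HD(p,θ*) for some θ* ∈ C, and suppose θ₀ is the unique global minimizer of HD(p,·) over Θ. Assume θ ↦ p_k(θ) is continuous on C for each k. If (q_n) ⊆ Γ satisfies q_{n,k} → p_k(θ₀) as n → ∞ for every k, then for all sufficiently large n the map θ ↦ HD(q_n,θ) attains a global minimum over Θ, and any sequence of such global minimizers converges to θ₀. (This is the pathwise statement underlying the strong consistency of the minimum Hellinger distance estimator.) -/

import Mathlib

open Filter Topology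

/-- `q` is a probability distribution on the nonnegative integers. -/
def IsDistrib (q : ℕ → ℝ) : Prop := (∀ k, 0 ≤ q k) ∧ HasSum q 1

/-- The squared Hellinger distance `HD(q,θ) = Σ_k (q_k^{1/2} - p_k(θ)^{1/2})²`. -/
noncomputable def HDdist (p : ℝ → ℕ → ℝ) (q : ℕ → ℝ) (θ : ℝ) : ℝ :=
  ∑' k, (Real.sqrt (q k) - Real.sqrt (p θ k))^2

private lemma sqrtmul_le {a b : ℝ} (ha : 0 ≤ a) (hb : 0 ≤ b) :
    Real.sqrt (a * b) ≤ (a + b) / 2 := by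
  have h1 : a * b ≤ ((a + b) / 2) ^ 2 := by nlinarith [sq_nonneg (a - b)]
  calc Real.sqrt (a * b) ≤ Real.sqrt (((a + b) / 2) ^ 2) := Real.sqrt_le_sqrt h1
    _ = (a + b) / 2 := Real.sqrt_sq (by positivity)

private lemma summable_sqrtmul {q r : ℕ → ℝ} (hq0 : ∀ k, 0 ≤ q k) (hr0 : ∀ k, 0 ≤ r k)
    (hq : Summable q) (hr : Summable r) :
    Summable fun k => Real.sqrt (q k * r k) := by
  refine Summable.of_nonneg_of_le (fun k => Real.sqrt_nonneg _)
    (fun k => sqrtmul_le (hq0 k) (hr0 k)) ?_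
  exact (hq.add hr).div_const 2

private lemma summable_sqdiff {q r : ℕ → ℝ} (hq0 : ∀ k, 0 ≤ q k) (hr0 : ∀ k, 0 ≤ r k)
    (hq : Summable q) (hr : Summable r) :
    Summable fun k => (Real.sqrt (q k) - Real.sqrt (r k)) ^ 2 := by
  refine Summable.of_nonneg_of_le (fun k => sq_nonneg _) (fun k => ?_)
    ((hq.mul_left 2).add (hr.mul_left 2))
  have h1 := Real.sq_sqrt (hq0 k)
  have h2 := Real.sq_sqrt (hr0 k)
  nlinarith [sq_nonneg (Real.sqrt (q k) + Real.sqrt (r k))]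

private lemma sqdiff_eq {a b : ℝ} (ha : 0 ≤ a) (hb : 0 ≤ b) :
    (Real.sqrt a - Real.sqrt b) ^ 2 = a + b - 2 * Real.sqrt (a * b) := by
  rw [Real.sqrt_mul ha]
  linear_combination Real.sq_sqrt ha + Real.sq_sqrt hb

private lemma HD_rep {q r : ℕ → ℝ} (hq0 : ∀ k, 0 ≤ q k) (hq : HasSum q 1)
    (hr0 : ∀ k, 0 ≤ r k) (hr : HasSum r 1) :
    ∑' k, (Real.sqrt (q k) - Real.sqrt (r k)) ^ 2
      = 2 - 2 * ∑' k, Real.sqrt (q k * r k) := by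
  have hs : Summable fun k => Real.sqrt (q k * r k) :=
    summable_sqrtmul hq0 hr0 hq.summable hr.summable
  have key : HasSum (fun k => q k + r k - 2 * Real.sqrt (q k * r k))
      (1 + 1 - 2 * ∑' k, Real.sqrt (q k * r k)) :=
    (hq.add hr).sub (hs.hasSum.mul_left 2)
  have hpt : (fun k => (Real.sqrt (q k) - Real.sqrt (r k)) ^ 2)
      = fun k => q k + r k - 2 * Real.sqrt (q k * r k) :=
    funext fun k => sqdiff_eq (hq0 k) (hr0 k)
  rw [hpt, key.tsum_eq]; ring

private lemma min_le_sqrtmul {a b : ℝ} (ha : 0 ≤ a) (hb : 0 ≤ b) :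
    min a b ≤ Real.sqrt (a * b) := by
  rcases le_total a b with h | h
  · rw [min_eq_left h]
    calc a = Real.sqrt (a * a) := by rw [Real.sqrt_mul_self ha]
      _ ≤ Real.sqrt (a * b) := Real.sqrt_le_sqrt (by nlinarith)
  · rw [min_eq_right h]
    calc b = Real.sqrt (b * b) := by rw [Real.sqrt_mul_self hb]
      _ ≤ Real.sqrt (a * b) := Real.sqrt_le_sqrt (by nlinarith)
private lemma perterm {x y t : ℝ} (hy : 0 ≤ y) (ht : 0 < t) :
    |x * y| ≤ (t / 2) * x ^ 2 + (1 / (2 * t)) * y ^ 2 := by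
  rw [abs_le]
  have h1 : 2 * t * ((1 / (2 * t)) * y ^ 2) = y ^ 2 := by field_simp
  constructor
  · have h : 2 * t * (-((t / 2) * x ^ 2 + (1 / (2 * t)) * y ^ 2)) ≤ 2 * t * (x * y) := by
      rw [mul_neg, mul_add, h1]
      nlinarith [sq_nonneg (t * x + y)]
    exact le_of_mul_le_mul_left h (by positivity)
  · have h : 2 * t * (x * y) ≤ 2 * t * ((t / 2) * x ^ 2 + (1 / (2 * t)) * y ^ 2) := by
      rw [mul_add, h1]
      nlinarith [sq_nonneg (t * x - y)]
    exact le_of_mul_le_mul_left h (by positivity)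

private lemma HD_est {p : ℝ → ℕ → ℝ} {q q' : ℕ → ℝ} {θ : ℝ}
    (hq : IsDistrib q) (hq' : IsDistrib q') (hpθ : IsDistrib (p θ)) :
    |HDdist p q θ - HDdist p q' θ|
      ≤ 2 * Real.sqrt (∑' k, (Real.sqrt (q k) - Real.sqrt (q' k)) ^ 2) := by
  obtain ⟨hq0, hq1⟩ := hq
  obtain ⟨hq'0, hq'1⟩ := hq'
  obtain ⟨hp0, hp1⟩ := hpθ
  set H : ℝ := ∑' k, (Real.sqrt (q k) - Real.sqrt (q' k)) ^ 2 with hHdef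
  have hH0 : 0 ≤ H := tsum_nonneg fun k => sq_nonneg _
  have hHsum : Summable fun k => (Real.sqrt (q k) - Real.sqrt (q' k)) ^ 2 :=
    summable_sqdiff hq0 hq'0 hq1.summable hq'1.summable
  -- Step A
  have stepA : ∀ t : ℝ, 0 < t → |HDdist p q θ - HDdist p q' θ| ≤ t * H + 1 / t := by
    intro t ht
    have hA : Summable fun k => Real.sqrt (q k * p θ k) :=
      summable_sqrtmul hq0 hp0 hq1.summable hp1.summable
    have hB : Summable fun k => Real.sqrt (q' k * p θ k) :=
      summable_sqrtmul hq'0 hp0 hq'1.summable hp1.summable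
    have hrepq : HDdist p q θ = 2 - 2 * ∑' k, Real.sqrt (q k * p θ k) :=
      HD_rep hq0 hq1 hp0 hp1
    have hrepq' : HDdist p q' θ = 2 - 2 * ∑' k, Real.sqrt (q' k * p θ k) :=
      HD_rep hq'0 hq'1 hp0 hp1
    set f : ℕ → ℝ := fun k => Real.sqrt (q' k * p θ k) - Real.sqrt (q k * p θ k) with hfdef
    set g : ℕ → ℝ := fun k =>
      (t / 2) * (Real.sqrt (q' k) - Real.sqrt (q k)) ^ 2 + (1 / (2 * t)) * p θ k with hgdef
    have hfs : Summable f := hB.sub hA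
    have hgs : Summable g := by
      refine Summable.add (Summable.mul_left _ ?_) (hp1.summable.mul_left _)
      exact summable_sqdiff hq'0 hq0 hq'1.summable hq1.summable
    have hfg : ∀ k, |f k| ≤ g k := by
      intro k
      have hfk : f k = (Real.sqrt (q' k) - Real.sqrt (q k)) * Real.sqrt (p θ k) := by
        simp only [hfdef, Real.sqrt_mul (hq'0 k), Real.sqrt_mul (hq0 k)]; ring
      have := perterm (x := Real.sqrt (q' k) - Real.sqrt (q k))
        (y := Real.sqrt (p θ k)) (Real.sqrt_nonneg _) ht
      rw [hfk]
      calc |(Real.sqrt (q' k) - Real.sqrt (q k)) * Real.sqrt (p θ k)|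
          ≤ (t / 2) * (Real.sqrt (q' k) - Real.sqrt (q k)) ^ 2
            + (1 / (2 * t)) * Real.sqrt (p θ k) ^ 2 := this
        _ = g k := by rw [Real.sq_sqrt (hp0 k)]
    have habs : |∑' k, f k| ≤ ∑' k, g k := by
      calc |∑' k, f k| ≤ ∑' k, |f k| := by
            simpa [Real.norm_eq_abs] using norm_tsum_le_tsum_norm (f := f) (by simpa [Real.norm_eq_abs] using hfs.abs)
        _ ≤ ∑' k, g k := Summable.tsum_le_tsum hfg hfs.abs hgs
    have hgsum : ∑' k, g k = (t / 2) * (∑' k, (Real.sqrt (q' k) - Real.sqrt (q k)) ^ 2)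
        + (1 / (2 * t)) * 1 := by
      rw [hgdef, Summable.tsum_add (Summable.mul_left _ (summable_sqdiff hq'0 hq0 hq'1.summable hq1.summable))
        (hp1.summable.mul_left _), tsum_mul_left, tsum_mul_left, hp1.tsum_eq]
    have hHsymm : (∑' k, (Real.sqrt (q' k) - Real.sqrt (q k)) ^ 2) = H := by
      rw [hHdef]; congr 1; funext k; ring
    have hdiff : HDdist p q θ - HDdist p q' θ = 2 * ∑' k, f k := by
      rw [hrepq, hrepq', hfdef, Summable.tsum_sub hB hA]; ring
    rw [hdiff, abs_mul, abs_of_nonneg (by norm_num : (0:ℝ) ≤ 2)]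
    calc 2 * |∑' k, f k| ≤ 2 * ∑' k, g k := by linarith
      _ = t * H + 1 / t := by rw [hgsum, hHsymm]; field_simp
  -- Step B
  refine le_of_forall_pos_le_add fun ε hε => ?_
  have hden : 0 < Real.sqrt H + ε := by positivity
  have ht : 0 < 1 / (Real.sqrt H + ε) := by positivity
  have := stepA _ ht
  have h1 : 1 / (1 / (Real.sqrt H + ε)) = Real.sqrt H + ε := one_div_one_div _
  have h2 : (1 / (Real.sqrt H + ε)) * H ≤ Real.sqrt H := by
    rw [div_mul_eq_mul_div, one_mul, div_le_iff₀ hden]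
    nlinarith [Real.sq_sqrt hH0, Real.sqrt_nonneg H]
  linarith
private lemma HD_contOn {p : ℝ → ℕ → ℝ} {q : ℕ → ℝ} {C : Set ℝ}
    (hq : IsDistrib q) (hpd : ∀ θ ∈ C, IsDistrib (p θ))
    (hpcont : ∀ k, ContinuousOn (fun θ => p θ k) C) :
    ContinuousOn (fun θ => HDdist p q θ) C := by
  obtain ⟨hq0, hq1⟩ := hq
  have hqs : Summable q := hq1.summable
  have hScont : ContinuousOn (fun θ => ∑' k, Real.sqrt (q k * p θ k)) C := by
    refine TendstoUniformlyOn.continuousOn (p := (atTop : Filter (Finset ℕ)))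
      (F := fun (F : Finset ℕ) θ => ∑ k ∈ F, Real.sqrt (q k * p θ k)) ?_ ?_
    · rw [Metric.tendstoUniformlyOn_iff]
      intro ε hε
      have htail := tendsto_tsum_compl_atTop_zero q
      filter_upwards [(tendsto_order.1 htail).2 _ (show (0:ℝ) < ε ^ 2 / 2 by positivity)]
        with F hF θ hθ
      obtain ⟨hp0, hp1⟩ := hpd θ hθ
      have hps : Summable (p θ) := hp1.summable
      have hfs : Summable fun k => Real.sqrt (q k * p θ k) :=
        summable_sqrtmul hq0 hp0 hqs hps
      rw [Real.dist_eq, ← Summable.sum_add_tsum_subtype_compl hfs F, add_sub_cancel_left]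
      have hb : ∀ k : {x // x ∉ F}, Real.sqrt (q ↑k * p θ ↑k)
          ≤ (1 / ε) * q ↑k + (ε / 4) * p θ ↑k := by
        intro k
        have h := sqrtmul_le (a := 2 * q ↑k / ε) (b := ε * p θ ↑k / 2)
          (div_nonneg (by linarith [hq0 k.1]) hε.le)
          (div_nonneg (mul_nonneg hε.le (hp0 k.1)) (by norm_num))
        have heq : (2 * q ↑k / ε) * (ε * p θ ↑k / 2) = q ↑k * p θ ↑k := by
          field_simp
        rw [heq] at h
        calc Real.sqrt (q ↑k * p θ ↑k) ≤ (2 * q ↑k / ε + ε * p θ ↑k / 2) / 2 := h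
          _ = (1 / ε) * q ↑k + (ε / 4) * p θ ↑k := by ring
      have hsq : Summable fun k : {x // x ∉ F} => q ↑k := hqs.subtype _
      have hsp : Summable fun k : {x // x ∉ F} => p θ ↑k := hps.subtype _
      have hsub : |∑' k : {x // x ∉ F}, Real.sqrt (q ↑k * p θ ↑k)|
          = ∑' k : {x // x ∉ F}, Real.sqrt (q ↑k * p θ ↑k) :=
        abs_of_nonneg (tsum_nonneg fun k => Real.sqrt_nonneg _)
      rw [hsub]
      have hle : ∑' k : {x // x ∉ F}, Real.sqrt (q ↑k * p θ ↑k)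
          ≤ (1 / ε) * (∑' k : {x // x ∉ F}, q ↑k)
            + (ε / 4) * ∑' k : {x // x ∉ F}, p θ ↑k := by
        calc ∑' k : {x // x ∉ F}, Real.sqrt (q ↑k * p θ ↑k)
            ≤ ∑' k : {x // x ∉ F}, ((1 / ε) * q ↑k + (ε / 4) * p θ ↑k) :=
              Summable.tsum_le_tsum hb (hfs.subtype _) ((hsq.mul_left _).add (hsp.mul_left _))
          _ = _ := by rw [Summable.tsum_add (hsq.mul_left _) (hsp.mul_left _),
                tsum_mul_left, tsum_mul_left]
      have hple : ∑' k : {x // x ∉ F}, p θ ↑k ≤ 1 := by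
        have hsplit := Summable.sum_add_tsum_subtype_compl hps F
        rw [hp1.tsum_eq] at hsplit
        have : 0 ≤ ∑ k ∈ F, p θ k := Finset.sum_nonneg fun k _ => hp0 k
        linarith
      have hq4 : ∑' k : {x // x ∉ F}, q ↑k < ε ^ 2 / 2 := hF
      have hε4 : (1 / ε) * (∑' k : {x // x ∉ F}, q ↑k) < ε / 2 := by
        rw [div_mul_eq_mul_div, one_mul, div_lt_iff₀ hε]
        calc ∑' k : {x // x ∉ F}, q ↑k < ε ^ 2 / 2 := hq4
          _ = ε / 2 * ε := by ring
      have : (ε / 4) * ∑' k : {x // x ∉ F}, p θ ↑k ≤ ε / 4 := by nlinarith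
      linarith
    · refine Frequently.of_forall fun F => ?_
      refine continuousOn_finset_sum F fun k _ => ?_
      exact Real.continuous_sqrt.comp_continuousOn (continuousOn_const.mul (hpcont k))
  have h2 : ContinuousOn (fun θ => 2 - 2 * ∑' k, Real.sqrt (q k * p θ k)) C :=
    continuousOn_const.sub (continuousOn_const.mul hScont)
  refine h2.congr fun θ hθ => ?_
  obtain ⟨hp0, hp1⟩ := hpd θ hθ
  show HDdist p q θ = _
  exact HD_rep hq0 hq1 hp0 hp1

private lemma Hq_tendsto {q : ℕ → ℕ → ℝ} {r : ℕ → ℝ} (hq : ∀ n, IsDistrib (q n))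
    (hr : IsDistrib r) (hconv : ∀ k, Tendsto (fun n => q n k) atTop (𝓝 (r k))) :
    Tendsto (fun n => ∑' k, (Real.sqrt (q n k) - Real.sqrt (r k)) ^ 2) atTop (𝓝 0) := by
  obtain ⟨hr0, hr1⟩ := hr
  have hrs : Summable r := hr1.summable
  set G : ℕ → ℝ := fun n => ∑' k, (r k - min (q n k) (r k)) with hGdef
  have hmin0 : ∀ n k, 0 ≤ min (q n k) (r k) := fun n k => le_min ((hq n).1 k) (hr0 k)
  have hminle : ∀ n k, min (q n k) (r k) ≤ r k := fun n k => min_le_right _ _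
  have hsmin : ∀ n, Summable fun k => min (q n k) (r k) := fun n =>
    Summable.of_nonneg_of_le (hmin0 n) (hminle n) hrs
  have hsG : ∀ n, Summable fun k => r k - min (q n k) (r k) := fun n =>
    hrs.sub (hsmin n)
  have hG0 : ∀ n, 0 ≤ G n := fun n => tsum_nonneg fun k => by
    have := hminle n k; linarith
  -- G → 0
  have hGtend : Tendsto G atTop (𝓝 0) := by
    rw [tendsto_order]
    constructor
    · intro a ha
      exact Eventually.of_forall fun n => lt_of_lt_of_le ha (hG0 n)
    · intro ε hε
      have htail := tendsto_tsum_compl_atTop_zero r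
      obtain ⟨F, hF⟩ := ((tendsto_order.1 htail).2 _
        (show (0:ℝ) < ε / 4 by positivity)).exists
      -- finite sum tends to 0
      have hfin : Tendsto (fun n => ∑ k ∈ F, (r k - min (q n k) (r k))) atTop
          (𝓝 (∑ k ∈ F, (0:ℝ))) := by
        refine tendsto_finset_sum F fun k _ => ?_
        have h1 : Tendsto (fun n => min (q n k) (r k)) atTop (𝓝 (min (r k) (r k))) :=
          (hconv k).min tendsto_const_nhds
        rw [min_self] at h1
        simpa using (tendsto_const_nhds (x := r k)).sub h1
      rw [Finset.sum_const, smul_zero] at hfin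
      have hfin' : ∀ᶠ n in atTop, ∑ k ∈ F, (r k - min (q n k) (r k)) < ε / 2 :=
        (tendsto_order.1 hfin).2 _ (by positivity)
      filter_upwards [hfin'] with n hn
      have hsplit := Summable.sum_add_tsum_subtype_compl (hsG n) F
      have htailbound : ∑' k : {x // x ∉ F}, (r ↑k - min (q n ↑k) (r ↑k)) ≤ ε / 4 := by
        calc ∑' k : {x // x ∉ F}, (r ↑k - min (q n ↑k) (r ↑k))
            ≤ ∑' k : {x // x ∉ F}, r ↑k := by
              refine Summable.tsum_le_tsum (fun k => ?_) ((hsG n).subtype _) (hrs.subtype _)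
              have := hmin0 n ↑k; linarith
          _ ≤ ε / 4 := hF.le
      have : G n = ∑ k ∈ F, (r k - min (q n k) (r k))
          + ∑' k : {x // x ∉ F}, (r ↑k - min (q n ↑k) (r ↑k)) := hsplit.symm
      rw [this]; linarith
  -- squeeze
  refine squeeze_zero (fun n => tsum_nonneg fun k => sq_nonneg _) (fun n => ?_)
    (by simpa using hGtend.const_mul 2)
  -- ∑ (√qn − √r)² ≤ 2 * G n
  have hbd : ∀ k, (Real.sqrt (q n k) - Real.sqrt (r k)) ^ 2
      ≤ q n k + r k - 2 * min (q n k) (r k) := by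
    intro k
    rw [sqdiff_eq ((hq n).1 k) (hr0 k)]
    have := min_le_sqrtmul ((hq n).1 k) (hr0 k)
    linarith
  have hRHS : HasSum (fun k => q n k + r k - 2 * min (q n k) (r k))
      (1 + 1 - 2 * ∑' k, min (q n k) (r k)) :=
    ((hq n).2.add hr1).sub ((hsmin n).hasSum.mul_left 2)
  have hLHSs : Summable fun k => (Real.sqrt (q n k) - Real.sqrt (r k)) ^ 2 :=
    summable_sqdiff ((hq n).1) hr0 ((hq n).2.summable) hrs
  calc ∑' k, (Real.sqrt (q n k) - Real.sqrt (r k)) ^ 2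
      ≤ ∑' k, (q n k + r k - 2 * min (q n k) (r k)) :=
        Summable.tsum_le_tsum hbd hLHSs hRHS.summable
    _ = 1 + 1 - 2 * ∑' k, min (q n k) (r k) := hRHS.tsum_eq
    _ = 2 * G n := by
        have : G n = ∑' k, (r k - min (q n k) (r k)) := rfl
        rw [this, Summable.tsum_sub hrs (hsmin n), hr1.tsum_eq]; ring

/-- pathwise consistency of the MHDE: if `q_{n,k} → p_k(θ₀)` for every
`k`, then the minimizers of `HD(q_n,·)` eventually exist and converge to `θ₀`, the
unique global minimizer of `HD(p(θ₀),·)`. -/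
theorem stmt_6
    (Θ : Set ℝ) (p : ℝ → ℕ → ℝ) (C : Set ℝ) (θs θ₀ : ℝ)
    (qn : ℕ → ℕ → ℝ)
    (hp : ∀ θ ∈ Θ, IsDistrib (p θ)) (hppos : ∀ θ ∈ Θ, ∀ k, 0 < p θ k)
    (hθ₀ : θ₀ ∈ Θ) (hqn : ∀ n, IsDistrib (qn n))
    (hC : IsCompact C) (hCsub : C ⊆ Θ) (hθs : θs ∈ C)
    (hinf : ∃ c, HDdist p (p θ₀) θs < c ∧ ∀ θ ∈ Θ \ C, c ≤ HDdist p (p θ₀) θ)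
    (hθ₀min : ∀ θ ∈ Θ, HDdist p (p θ₀) θ₀ ≤ HDdist p (p θ₀) θ)
    (hθ₀uniq : ∀ θ₁ ∈ Θ,
      (∀ θ ∈ Θ, HDdist p (p θ₀) θ₁ ≤ HDdist p (p θ₀) θ) → θ₁ = θ₀)
    (hpcont : ∀ k, ContinuousOn (fun θ => p θ k) C)
    (hconv : ∀ k, Tendsto (fun n => qn n k) atTop (𝓝 (p θ₀ k))) :
    (∀ᶠ n in atTop, ∃ θ ∈ Θ, ∀ t ∈ Θ, HDdist p (qn n) θ ≤ HDdist p (qn n) t) ∧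
    ∀ θn : ℕ → ℝ,
      (∀ᶠ n in atTop, θn n ∈ Θ ∧
        ∀ t ∈ Θ, HDdist p (qn n) (θn n) ≤ HDdist p (qn n) t) →
      Tendsto θn atTop (𝓝 θ₀) := by
  obtain ⟨c, hc1, hc2⟩ := hinf
  have hθsΘ : θs ∈ Θ := hCsub hθs
  have hp₀d : IsDistrib (p θ₀) := hp θ₀ hθ₀
  set H : ℕ → ℝ := fun n => ∑' k, (Real.sqrt (qn n k) - Real.sqrt (p θ₀ k)) ^ 2 with hHdef
  have hHtend : Tendsto H atTop (𝓝 0) := Hq_tendsto hqn hp₀d hconv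
  set D : ℕ → ℝ := fun n => 2 * Real.sqrt (H n) with hDdef
  have hDtend : Tendsto D atTop (𝓝 0) := by
    have h1 : Tendsto (fun n => Real.sqrt (H n)) atTop (𝓝 (Real.sqrt 0)) :=
      (Real.continuous_sqrt.tendsto 0).comp hHtend
    rw [Real.sqrt_zero] at h1
    simpa using h1.const_mul 2
  have hest : ∀ n, ∀ θ ∈ Θ, |HDdist p (qn n) θ - HDdist p (p θ₀) θ| ≤ D n := by
    intro n θ hθ
    exact HD_est (hqn n) hp₀d (hp θ hθ)
  have hcontq : ∀ n, ContinuousOn (fun θ => HDdist p (qn n) θ) C := fun n =>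
    HD_contOn (hqn n) (fun θ hθ => hp θ (hCsub hθ)) hpcont
  have hcontp : ContinuousOn (fun θ => HDdist p (p θ₀) θ) C :=
    HD_contOn hp₀d (fun θ hθ => hp θ (hCsub hθ)) hpcont
  set ε : ℝ := (c - HDdist p (p θ₀) θs) / 3 with hεdef
  have hεpos : 0 < ε := by rw [hεdef]; linarith
  have hcε : c = HDdist p (p θ₀) θs + 3 * ε := by rw [hεdef]; ring
  have hev : ∀ᶠ n in atTop, D n < ε := (tendsto_order.1 hDtend).2 _ hεpos
  have hexist : ∀ n, D n < ε →
      ∃ θ ∈ Θ, ∀ t ∈ Θ, HDdist p (qn n) θ ≤ HDdist p (qn n) t := by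
    intro n hn
    obtain ⟨θm, hθmC, hθmmin⟩ := hC.exists_isMinOn ⟨θs, hθs⟩ (hcontq n)
    refine ⟨θm, hCsub hθmC, fun t ht => ?_⟩
    by_cases htC : t ∈ C
    · exact hθmmin htC
    · have h1 : HDdist p (qn n) θm ≤ HDdist p (qn n) θs := hθmmin hθs
      have h2 := hest n θs hθsΘ
      have h3 : c ≤ HDdist p (p θ₀) t := hc2 t ⟨ht, htC⟩
      have h4 := hest n t ht
      rw [abs_le] at h2 h4
      linarith [h2.2, h4.1]
  refine ⟨by filter_upwards [hev] with n hn using hexist n hn, ?_⟩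
  intro θn hθn
  have hevC : ∀ᶠ n in atTop, θn n ∈ C ∧ θn n ∈ Θ ∧
      ∀ t ∈ Θ, HDdist p (qn n) (θn n) ≤ HDdist p (qn n) t := by
    filter_upwards [hev, hθn] with n hn hmin
    obtain ⟨hnΘ, hnmin⟩ := hmin
    refine ⟨?_, hnΘ, hnmin⟩
    by_contra hnC
    have h3 : c ≤ HDdist p (p θ₀) (θn n) := hc2 _ ⟨hnΘ, hnC⟩
    have h4 := hest n (θn n) hnΘ
    have h2 := hest n θs hθsΘ
    have h1 : HDdist p (qn n) (θn n) ≤ HDdist p (qn n) θs := hnmin θs hθsΘ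
    rw [abs_le] at h2 h4
    linarith [h2.2, h4.1]
  apply Filter.tendsto_of_subseq_tendsto
  intro ns hns
  have hfreq : ∃ᶠ j in atTop, θn (ns j) ∈ C :=
    ((hns.eventually hevC).mono fun j h => h.1).frequently
  obtain ⟨θ', hθ'C, ms, hms, hmslim⟩ :=
    hC.tendsto_subseq' (x := fun j => θn (ns j)) hfreq
  refine ⟨ms, ?_⟩
  have hΘ' : θ' ∈ Θ := hCsub hθ'C
  have hsubev : ∀ᶠ j in atTop, θn (ns (ms j)) ∈ C ∧ θn (ns (ms j)) ∈ Θ ∧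
      ∀ t ∈ Θ, HDdist p (qn (ns (ms j))) (θn (ns (ms j)))
        ≤ HDdist p (qn (ns (ms j))) t :=
    (hns.comp hms.tendsto_atTop).eventually hevC
  have hDsub : Tendsto (fun j => D (ns (ms j))) atTop (𝓝 0) :=
    hDtend.comp (hns.comp hms.tendsto_atTop)
  have hmslim' : Tendsto (fun j => θn (ns (ms j))) atTop (𝓝 θ') := hmslim
  have hlim : Tendsto (fun j => HDdist p (p θ₀) (θn (ns (ms j)))) atTop
      (𝓝 (HDdist p (p θ₀) θ')) := by
    have hwithin : Tendsto (fun j => θn (ns (ms j))) atTop (𝓝[C] θ') :=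
      tendsto_nhdsWithin_iff.2 ⟨hmslim', hsubev.mono fun j h => h.1⟩
    exact ((hcontp θ' hθ'C).tendsto).comp hwithin
  have hminθ' : ∀ t ∈ Θ, HDdist p (p θ₀) θ' ≤ HDdist p (p θ₀) t := by
    intro t ht
    have hrhs : Tendsto (fun j => HDdist p (p θ₀) t + 2 * D (ns (ms j))) atTop
        (𝓝 (HDdist p (p θ₀) t + 2 * 0)) :=
      tendsto_const_nhds.add (hDsub.const_mul 2)
    rw [mul_zero, add_zero] at hrhs
    refine le_of_tendsto_of_tendsto hlim hrhs ?_
    filter_upwards [hsubev] with j hj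
    obtain ⟨hjC, hjΘ, hjmin⟩ := hj
    have h4 := hest (ns (ms j)) (θn (ns (ms j))) hjΘ
    have h5 := hest (ns (ms j)) t ht
    have h6 : HDdist p (qn (ns (ms j))) (θn (ns (ms j)))
        ≤ HDdist p (qn (ns (ms j))) t := hjmin t ht
    rw [abs_le] at h4 h5
    have : HDdist p (p θ₀) (θn (ns (ms j))) ≤ HDdist p (p θ₀) t + 2 * D (ns (ms j)) := by
      linarith [h4.1, h5.2]
    exact this
  have hθ'eq : θ' = θ₀ := hθ₀uniq θ' hΘ' hminθ'
  rw [hθ'eq] at hmslim'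
  exact hmslim'
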